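/- For a positive odd integer j and any real r, (2/π)∫₀^π (r sin(jx))⁺ sin(jx) dx = (1/2)·(1 + sign(r)/j)·r, where s⁺ = max(s,0) and sign(r) ∈ {-1,0,1} is the sign of r. -/

import Mathlib

open Real MeasureTheory intervalIntegral

lemma ssabs_int : IntervalIntegrable (fun t : ℝ => Real.sin t * |Real.sin t|)
    volume 0 1 :=
  (Real.continuous_sin.mul Real.continuous_sin.abs).intervalIntegrable 0 1

lemma ssabs_int' (a b : ℝ) : IntervalIntegrable (fun t : ℝ => Real.sin t * |Real.sin t|)
    volume a b :=
  (Real.continuous_sin.mul Real.continuous_sin.abs).intervalIntegrable a b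

lemma int_ss_pi : ∫ t in (0:ℝ)..π, Real.sin t * |Real.sin t| = π / 2 := by
  have h : ∫ t in (0:ℝ)..π, Real.sin t * |Real.sin t| = ∫ t in (0:ℝ)..π, Real.sin t ^ 2 := by
    apply intervalIntegral.integral_congr
    intro x hx
    rw [Set.uIcc_of_le Real.pi_nonneg] at hx
    show Real.sin x * |Real.sin x| = Real.sin x ^ 2
    rw [abs_of_nonneg (Real.sin_nonneg_of_nonneg_of_le_pi hx.1 hx.2)]
    ring
  rw [h, integral_sin_sq]
  simp

lemma int_ss_2pi : ∫ t in (0:ℝ)..2*π, Real.sin t * |Real.sin t| = 0 := by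
  have hsplit : ∫ t in (0:ℝ)..2*π, Real.sin t * |Real.sin t|
      = (∫ t in (0:ℝ)..π, Real.sin t * |Real.sin t|)
        + ∫ t in (π:ℝ)..2*π, Real.sin t * |Real.sin t| :=
    (intervalIntegral.integral_add_adjacent_intervals (ssabs_int' 0 π) (ssabs_int' π (2*π))).symm
  have h2 : ∫ t in (π:ℝ)..2*π, Real.sin t * |Real.sin t| = - (π/2) := by
    have := intervalIntegral.integral_comp_add_right (a := (0:ℝ)) (b := π)
      (fun t => Real.sin t * |Real.sin t|) π
    rw [zero_add] at this
    have h2pi : π + π = 2*π := by ring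
    rw [h2pi] at this
    rw [← this]
    have : ∫ x in (0:ℝ)..π, Real.sin (x + π) * |Real.sin (x + π)|
        = ∫ x in (0:ℝ)..π, -(Real.sin x * |Real.sin x|) := by
      apply intervalIntegral.integral_congr
      intro x _
      show Real.sin (x + π) * |Real.sin (x + π)| = -(Real.sin x * |Real.sin x|)
      rw [Real.sin_add_pi]
      rw [abs_neg]
      ring
    rw [this, intervalIntegral.integral_neg, int_ss_pi]
  rw [hsplit, int_ss_pi, h2]
  ring

lemma int_ss_jpi (j : ℕ) (hj : 0 < j) (hjo : Odd j) :
    ∫ t in (0:ℝ)..j*π, Real.sin t * |Real.sin t| = π / 2 := by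
  obtain ⟨k, hk⟩ := hjo
  have hper : Function.Periodic (fun t : ℝ => Real.sin t * |Real.sin t|) (2*π) := by
    intro x
    simp [Real.sin_add_two_pi]
  have hj' : (j:ℝ) * π = π + (k : ℤ) • (2*π) := by
    rw [zsmul_eq_mul]; push_cast [hk]; ring
  have hsplit : ∫ t in (0:ℝ)..j*π, Real.sin t * |Real.sin t|
      = (∫ t in (0:ℝ)..π, Real.sin t * |Real.sin t|)
        + ∫ t in (π:ℝ)..(j*π), Real.sin t * |Real.sin t| :=
    (intervalIntegral.integral_add_adjacent_intervals (ssabs_int' 0 π) (ssabs_int' π _)).symm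
  have htail : ∫ t in (π:ℝ)..(j*π), Real.sin t * |Real.sin t| = 0 := by
    rw [hj']
    rw [hper.intervalIntegral_add_zsmul_eq (k:ℤ) π ssabs_int']
    have : ∫ t in (π:ℝ)..(π + 2*π), Real.sin t * |Real.sin t|
        = ∫ t in (0:ℝ)..(0 + 2*π), Real.sin t * |Real.sin t| :=
      hper.intervalIntegral_add_eq π 0
    rw [this, zero_add, int_ss_2pi, smul_zero]
  rw [hsplit, int_ss_pi, htail, add_zero]

lemma max_half (a : ℝ) : max a 0 = (a + |a|) / 2 := by
  rcases le_or_gt a 0 with h | h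
  · rw [max_eq_right h, abs_of_nonpos h]; ring
  · rw [max_eq_left h.le, abs_of_pos h]; ring

theorem stmt9 (j : ℕ) (hj : 0 < j) (hjo : Odd j) (r : ℝ) :
    (2 / π) * ∫ x in (0:ℝ)..π, max (r * Real.sin (j * x)) 0 * Real.sin (j * x)
      = (1 / 2) * (1 + Real.sign r / j) * r := by
  have hjne : (j:ℝ) ≠ 0 := Nat.cast_ne_zero.mpr hj.ne'
  have hpi : (π:ℝ) ≠ 0 := Real.pi_ne_zero
  -- pointwise rewrite
  have hpt : ∀ x : ℝ, max (r * Real.sin (j * x)) 0 * Real.sin (j * x)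
      = r / 2 * Real.sin (j * x) ^ 2
        + |r| / 2 * (Real.sin (j * x) * |Real.sin (j * x)|) := by
    intro x
    rw [max_half, abs_mul]
    ring
  have hI1 : ∫ x in (0:ℝ)..π, Real.sin (j * x) ^ 2 = π / 2 := by
    have := intervalIntegral.integral_comp_mul_left (a := (0:ℝ)) (b := π)
      (fun t => Real.sin t ^ 2) hjne
    rw [this, mul_zero, integral_sin_sq]
    rw [Real.sin_zero, Real.sin_nat_mul_pi]
    rw [smul_eq_mul]
    field_simp
    ring
  have hI2 : ∫ x in (0:ℝ)..π, Real.sin (j * x) * |Real.sin (j * x)| = π / (2 * j) := by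
    have := intervalIntegral.integral_comp_mul_left (a := (0:ℝ)) (b := π)
      (fun t => Real.sin t * |Real.sin t|) hjne
    rw [this, mul_zero, int_ss_jpi j hj hjo]
    rw [smul_eq_mul]
    ring
  have hint1 : IntervalIntegrable (fun x : ℝ => r / 2 * Real.sin (j * x) ^ 2)
      volume 0 π := by
    apply Continuous.intervalIntegrable
    continuity
  have hint2 : IntervalIntegrable
      (fun x : ℝ => |r| / 2 * (Real.sin (j * x) * |Real.sin (j * x)|))
      volume 0 π := by
    apply Continuous.intervalIntegrable
    exact continuous_const.mul ((Real.continuous_sin.comp (continuous_const.mul continuous_id)).mul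
      (Real.continuous_sin.comp (continuous_const.mul continuous_id)).abs)
  have hsum : ∫ x in (0:ℝ)..π, max (r * Real.sin (j * x)) 0 * Real.sin (j * x)
      = r / 2 * (π / 2) + |r| / 2 * (π / (2 * j)) := by
    rw [intervalIntegral.integral_congr (g := fun x =>
      r / 2 * Real.sin (j * x) ^ 2 + |r| / 2 * (Real.sin (j * x) * |Real.sin (j * x)|))
      (fun x _ => hpt x)]
    rw [intervalIntegral.integral_add hint1 hint2,
      intervalIntegral.integral_const_mul, intervalIntegral.integral_const_mul, hI1, hI2]
  rw [hsum]
  have habs : |r| = Real.sign r * r := by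
    rcases lt_trichotomy r 0 with h | h | h
    · rw [abs_of_neg h, Real.sign_of_neg h]; ring
    · simp [h]
    · rw [abs_of_pos h, Real.sign_of_pos h]; ring
  rw [habs]
  field_simp
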